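/- The Hamming graph H(n1,...,nk) = K_{n1} □ K_{n2} □ ⋯ □ K_{nk} admits an interval coloring if the product n1·n2⋯nk is even, and does not admit an interval coloring if n1·n2⋯nk is odd (with each ni ≥ 2). -/

import Mathlib

open SimpleGraph

/-- `c` is an interval `t`-coloring of `G`: edges get colors in `{1,…,t}`, every color
`1,…,t` is used, adjacent edges get distinct colors, and the set of colors of edges
incident to any vertex is an interval of integers. -/
def IsIntervalColoring {V : Type*} (G : SimpleGraph V) (t : ℕ) (c : Sym2 V → ℕ) : Prop :=
  (∀ e ∈ G.edgeSet, 1 ≤ c e ∧ c e ≤ t) ∧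
  (∀ i, 1 ≤ i → i ≤ t → ∃ e ∈ G.edgeSet, c e = i) ∧
  (∀ v w₁ w₂, G.Adj v w₁ → G.Adj v w₂ → w₁ ≠ w₂ → c s(v, w₁) ≠ c s(v, w₂)) ∧
  (∀ v i j k, (∃ w, G.Adj v w ∧ c s(v, w) = i) → (∃ w, G.Adj v w ∧ c s(v, w) = k) →
    i ≤ j → j ≤ k → ∃ w, G.Adj v w ∧ c s(v, w) = j)

/-- `G` has an interval `t`-coloring. -/
def HasIntervalColoring {V : Type*} (G : SimpleGraph V) (t : ℕ) : Prop :=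
  ∃ c : Sym2 V → ℕ, IsIntervalColoring G t c

/-- `G` is interval colorable (`G ∈ 𝔑`). -/
def IntervalColorable {V : Type*} (G : SimpleGraph V) : Prop :=
  ∃ t : ℕ, 1 ≤ t ∧ HasIntervalColoring G t

/-- `w G`: the least number of colors in an interval coloring of `G`. -/
noncomputable def wNum {V : Type*} (G : SimpleGraph V) : ℕ :=
  sInf {t | HasIntervalColoring G t}

/-- `W G`: the greatest number of colors in an interval coloring of `G`. -/
noncomputable def WNum {V : Type*} (G : SimpleGraph V) : ℕ :=
  sSup {t | HasIntervalColoring G t}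

/-- `G` is `r`-regular: every vertex has exactly `r` neighbors. -/
def IsRegularGraph {V : Type*} (G : SimpleGraph V) (r : ℕ) : Prop :=
  ∀ v : V, (G.neighborSet v).ncard = r

/-- `c` is a proper edge coloring of `G` using colors `0,…,k-1`. -/
def IsProperEdgeColoring {V : Type*} (G : SimpleGraph V) (k : ℕ) (c : Sym2 V → ℕ) : Prop :=
  (∀ e ∈ G.edgeSet, c e < k) ∧
  (∀ v w₁ w₂, G.Adj v w₁ → G.Adj v w₂ → w₁ ≠ w₂ → c s(v, w₁) ≠ c s(v, w₂))

/-- The chromatic index `χ'(G)`. -/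
noncomputable def edgeChromaticNumber {V : Type*} (G : SimpleGraph V) : ℕ :=
  sInf {k | ∃ c : Sym2 V → ℕ, IsProperEdgeColoring G k c}

/-- `G` is 1-factorable: its edge set decomposes into perfect matchings. -/
def IsOneFactorable {V : Type*} (G : SimpleGraph V) : Prop :=
  ∃ (n : ℕ) (f : Fin n → SimpleGraph.Subgraph G),
    (∀ i, (f i).IsPerfectMatching) ∧
    (∀ e ∈ G.edgeSet, ∃! i, e ∈ (f i).edgeSet)

/-- The tensor (direct) product `G × H`. -/
def tensorProd {α β : Type*} (G : SimpleGraph α) (H : SimpleGraph β) :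
    SimpleGraph (α × β) where
  Adj p q := G.Adj p.1 q.1 ∧ H.Adj p.2 q.2
  symm := ⟨fun p q ⟨h₁, h₂⟩ => ⟨h₁.symm, h₂.symm⟩⟩
  loopless := ⟨fun p h => G.loopless.1 p.1 h.1⟩

/-- The strong tensor (semistrong) product `G ⊗ H`. -/
def strongTensorProd {α β : Type*} (G : SimpleGraph α) (H : SimpleGraph β) :
    SimpleGraph (α × β) where
  Adj p q := (G.Adj p.1 q.1 ∧ H.Adj p.2 q.2) ∨ (p.2 = q.2 ∧ G.Adj p.1 q.1)
  symm := ⟨fun p q h => by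
    rcases h with ⟨h₁, h₂⟩ | ⟨h₁, h₂⟩
    · exact Or.inl ⟨h₁.symm, h₂.symm⟩
    · exact Or.inr ⟨h₁.symm, h₂.symm⟩⟩
  loopless := ⟨fun p h => by
    rcases h with ⟨h₁, _⟩ | ⟨_, h₁⟩ <;> exact G.loopless.1 p.1 h₁⟩

/-- The strong product `G ⊠ H`. -/
def strongProd {α β : Type*} (G : SimpleGraph α) (H : SimpleGraph β) :
    SimpleGraph (α × β) where
  Adj p q := (G.Adj p.1 q.1 ∧ H.Adj p.2 q.2) ∨ (p.1 = q.1 ∧ H.Adj p.2 q.2) ∨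
    (p.2 = q.2 ∧ G.Adj p.1 q.1)
  symm := ⟨fun p q h => by
    rcases h with ⟨h₁, h₂⟩ | ⟨h₁, h₂⟩ | ⟨h₁, h₂⟩
    · exact Or.inl ⟨h₁.symm, h₂.symm⟩
    · exact Or.inr (Or.inl ⟨h₁.symm, h₂.symm⟩)
    · exact Or.inr (Or.inr ⟨h₁.symm, h₂.symm⟩)⟩
  loopless := ⟨fun p h => by
    rcases h with ⟨h₁, _⟩ | ⟨_, h₂⟩ | ⟨_, h₁⟩
    · exact G.loopless.1 p.1 h₁
    · exact H.loopless.1 p.2 h₂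
    · exact G.loopless.1 p.1 h₁⟩

/-- The lexicographic product (composition) `G[H]`. -/
def lexProd {α β : Type*} (G : SimpleGraph α) (H : SimpleGraph β) :
    SimpleGraph (α × β) where
  Adj p q := G.Adj p.1 q.1 ∨ (p.1 = q.1 ∧ H.Adj p.2 q.2)
  symm := ⟨fun p q h => by
    rcases h with h₁ | ⟨h₁, h₂⟩
    · exact Or.inl h₁.symm
    · exact Or.inr ⟨h₁.symm, h₂.symm⟩⟩
  loopless := ⟨fun p h => by
    rcases h with h₁ | ⟨_, h₂⟩
    · exact G.loopless.1 p.1 h₁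
    · exact H.loopless.1 p.2 h₂⟩

/-- The Hamming graph `H(n₁,…,n_k) = K_{n₁} □ ⋯ □ K_{n_k}`: vertices are tuples,
two tuples adjacent iff they differ in exactly one coordinate. -/
def hammingGraph (k : ℕ) (n : Fin k → ℕ) : SimpleGraph (∀ i, Fin (n i)) where
  Adj x y := ∃! i, x i ≠ y i
  symm := ⟨fun x y ⟨i, hi, hu⟩ => ⟨i, hi.symm, fun j hj => hu j hj.symm⟩⟩
  loopless := ⟨fun x ⟨_, hi, _⟩ => hi rfl⟩

namespace HamProof

open Finset

attribute [local instance] Classical.propDecidable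

variable {k : ℕ} {n : Fin k → ℕ}

lemma adj_iff {x y : ∀ i, Fin (n i)} :
    (hammingGraph k n).Adj x y ↔ ∃ i, x i ≠ y i ∧ ∀ j, x j ≠ y j → j = i := Iff.rfl

lemma adj_update {x : ∀ i, Fin (n i)} {i : Fin k} {b : Fin (n i)} (hb : b ≠ x i) :
    (hammingGraph k n).Adj x (Function.update x i b) := by
  refine adj_iff.mpr ⟨i, ?_, ?_⟩
  · simpa using Ne.symm hb
  · intro j hj
    by_contra hji
    rw [Function.update_of_ne hji] at hj
    exact hj rfl

lemma eq_update_of_adj {x w : ∀ i, Fin (n i)} (h : (hammingGraph k n).Adj x w)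
    {i : Fin k} (hi : x i ≠ w i) : w = Function.update x i (w i) := by
  obtain ⟨j, hj, hu⟩ := h
  have hij : i = j := hu i hi
  subst hij
  funext l
  rcases eq_or_ne l i with rfl | hl
  · simp
  · rw [Function.update_of_ne hl]
    by_contra hne
    exact hl (hu l (Ne.symm hne))

/-- The set of directions out of a vertex. -/
def dirs (x : ∀ i, Fin (n i)) : Finset (Σ i : Fin k, Fin (n i)) :=
  Finset.univ.filter fun p => p.2 ≠ x p.1

lemma mem_dirs {x : ∀ i, Fin (n i)} {p : Σ i : Fin k, Fin (n i)} :
    p ∈ dirs x ↔ p.2 ≠ x p.1 := by simp [dirs]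

lemma card_dirs (x : ∀ i, Fin (n i)) :
    (dirs x).card = ∑ i, (n i - 1) := by
  have : dirs x = Finset.univ.sigma fun i => Finset.univ.filter (· ≠ x i) := by
    ext p; simp [dirs]
  rw [this, Finset.card_sigma]
  refine Finset.sum_congr rfl fun i _ => ?_
  rw [Finset.filter_ne', Finset.card_erase_of_mem (Finset.mem_univ _)]
  simp

noncomputable def nbrs (x : ∀ i, Fin (n i)) : Finset (∀ i, Fin (n i)) :=
  Finset.univ.filter ((hammingGraph k n).Adj x)

lemma mem_nbrs {x w : ∀ i, Fin (n i)} : w ∈ nbrs x ↔ (hammingGraph k n).Adj x w := by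
  simp [nbrs]

lemma card_nbrs (x : ∀ i, Fin (n i)) :
    (nbrs x).card = ∑ i, (n i - 1) := by
  rw [← card_dirs x]
  refine (Finset.card_bij (fun p _ => Function.update x p.1 p.2) ?_ ?_ ?_).symm
  · intro p hp
    exact mem_nbrs.mpr (adj_update (mem_dirs.mp hp))
  · intro p hp q hq hpq
    rcases eq_or_ne p.1 q.1 with h1 | h1
    · obtain ⟨pi, pb⟩ := p; obtain ⟨qi, qb⟩ := q
      dsimp only at h1
      cases h1
      have : pb = qb := by
        have h2 := congrFun hpq pi
        simpa using h2
      simp [this]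
    · exfalso
      have h2 := congrFun hpq q.1
      rw [Function.update_of_ne (Ne.symm h1), Function.update_self] at h2
      exact mem_dirs.mp hq h2.symm
  · intro w hw
    have hadj := mem_nbrs.mp hw
    obtain ⟨i, hi, hu⟩ := mem_nbrs.mp hw
    refine ⟨⟨i, w i⟩, mem_dirs.mpr (Ne.symm hi), ?_⟩
    exact (eq_update_of_adj hadj hi).symm

end HamProof
namespace HamProof

variable {k : ℕ} {n : Fin k → ℕ}

lemma palette_eq {t : ℕ} {c : Sym2 (∀ i, Fin (n i)) → ℕ}
    (hc : IsIntervalColoring (hammingGraph k n) t c) (x : ∀ i, Fin (n i))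
    (hne : (nbrs x).Nonempty) :
    ∃ m, ((nbrs x).image fun w => c s(x, w)) =
      Finset.Icc m (m + ((nbrs x).image fun w => c s(x, w)).card - 1) ∧ 1 ≤ m := by
  obtain ⟨hbd, _, hprop, hint⟩ := hc
  set P := (nbrs x).image fun w => c s(x, w) with hP
  have hPne : P.Nonempty := hne.image _
  set m := P.min' hPne with hm
  set M := P.max' hPne with hM
  have hmM : m ≤ M := P.min'_le M (P.max'_mem hPne)
  have hPI : P = Finset.Icc m M := by
    apply Finset.Subset.antisymm
    · intro j hj
      exact Finset.mem_Icc.mpr ⟨P.min'_le j hj, P.le_max' j hj⟩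
    · intro j hj
      rw [Finset.mem_Icc] at hj
      obtain ⟨w1, hw1, hcw1⟩ := Finset.mem_image.mp (P.min'_mem hPne)
      obtain ⟨w2, hw2, hcw2⟩ := Finset.mem_image.mp (P.max'_mem hPne)
      obtain ⟨w, hw, hcw⟩ := hint x m j M ⟨w1, mem_nbrs.mp hw1, hcw1⟩
        ⟨w2, mem_nbrs.mp hw2, hcw2⟩ hj.1 hj.2
      exact Finset.mem_image.mpr ⟨w, mem_nbrs.mpr hw, hcw⟩
  have hcard : P.card = M + 1 - m := by rw [hPI, Nat.card_Icc]
  refine ⟨m, ?_, ?_⟩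
  · rw [hPI, Nat.card_Icc]
    congr 1
    omega
  · obtain ⟨w1, hw1, hcw1⟩ := Finset.mem_image.mp (P.min'_mem hPne)
    have := (hbd s(x, w1) ((hammingGraph k n).mem_edgeSet.mpr (mem_nbrs.mp hw1))).1
    omega

lemma odd_case (hn : ∀ i, 2 ≤ n i) (hodd : Odd (∏ i, n i)) :
    ¬ IntervalColorable (hammingGraph k n) := by
  rintro ⟨t, ht, c, hc⟩
  rcases Nat.eq_zero_or_pos k with rfl | hk
  · obtain ⟨e, he, -⟩ := hc.2.1 1 le_rfl ht
    induction e using Sym2.ind with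
    | _ x y =>
      rw [SimpleGraph.mem_edgeSet] at he
      obtain ⟨i, -, -⟩ := he
      exact i.elim0
  · set r := ∑ i, (n i - 1) with hrdef
    have hr : 1 ≤ r := by
      have h0 : (1:ℕ) ≤ n ⟨0, hk⟩ - 1 := by have := hn ⟨0, hk⟩; omega
      calc (1:ℕ) ≤ n ⟨0, hk⟩ - 1 := h0
        _ ≤ r := Finset.single_le_sum (f := fun i => n i - 1) (fun i _ => Nat.zero_le _) (Finset.mem_univ (⟨0, hk⟩ : Fin k))
    have hVne : Nonempty (∀ i, Fin (n i)) := ⟨fun i => ⟨0, by have := hn i; omega⟩⟩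
    -- injectivity of colors on neighbors
    have hinj : ∀ x : ∀ i, Fin (n i), ∀ w1 ∈ nbrs x, ∀ w2 ∈ nbrs x,
        c s(x, w1) = c s(x, w2) → w1 = w2 := by
      intro x w1 hw1 w2 hw2 hcc
      by_contra hne
      exact hc.2.2.1 x w1 w2 (mem_nbrs.mp hw1) (mem_nbrs.mp hw2) hne hcc
    have hNne : ∀ x : ∀ i, Fin (n i), (nbrs x).Nonempty := by
      intro x
      rw [← Finset.card_pos, card_nbrs]
      omega
    have hPcard : ∀ x : ∀ i, Fin (n i), ((nbrs x).image fun w => c s(x, w)).card = r := by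
      intro x
      rw [Finset.card_image_of_injOn fun w1 h1 w2 h2 => hinj x w1 h1 w2 h2, card_nbrs]
    -- existence and uniqueness of a neighbor with color divisible by r
    have hex : ∀ x : ∀ i, Fin (n i), ∃ w, (hammingGraph k n).Adj x w ∧ r ∣ c s(x, w) := by
      intro x
      obtain ⟨m, hPI, hm1⟩ := palette_eq hc x (hNne x)
      rw [hPcard] at hPI
      -- find a multiple of r in [m, m + r - 1]
      have hdiv := Nat.div_add_mod (m + r - 1) r
      have hmod := Nat.mod_lt (m + r - 1) (by omega : 0 < r)
      set q := (m + r - 1) / r with hq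
      set s := (m + r - 1) % r with hs
      have hjmem : r * q ∈ Finset.Icc m (m + r - 1) := by
        rw [Finset.mem_Icc]
        omega
      rw [← hPI] at hjmem
      obtain ⟨w, hw, hcw⟩ := Finset.mem_image.mp hjmem
      exact ⟨w, mem_nbrs.mp hw, hcw ▸ ⟨q, rfl⟩⟩
    have hun : ∀ x w1 w2 : ∀ i, Fin (n i), (hammingGraph k n).Adj x w1 → r ∣ c s(x, w1) →
        (hammingGraph k n).Adj x w2 → r ∣ c s(x, w2) → w1 = w2 := by
      intro x w1 w2 ha1 hd1 ha2 hd2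
      obtain ⟨m, hPI, hm1⟩ := palette_eq hc x (hNne x)
      rw [hPcard] at hPI
      have h1 : c s(x, w1) ∈ Finset.Icc m (m + r - 1) := by
        rw [← hPI]
        exact Finset.mem_image.mpr ⟨w1, mem_nbrs.mpr ha1, rfl⟩
      have h2 : c s(x, w2) ∈ Finset.Icc m (m + r - 1) := by
        rw [← hPI]
        exact Finset.mem_image.mpr ⟨w2, mem_nbrs.mpr ha2, rfl⟩
      rw [Finset.mem_Icc] at h1 h2
      have hceq : c s(x, w1) = c s(x, w2) := by
        rcases le_total (c s(x, w1)) (c s(x, w2)) with hle | hle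
        · have hdd : r ∣ c s(x, w2) - c s(x, w1) := Nat.dvd_sub hd2 hd1
          have := Nat.eq_zero_of_dvd_of_lt hdd (by omega : c s(x, w2) - c s(x, w1) < r)
          omega
        · have hdd : r ∣ c s(x, w1) - c s(x, w2) := Nat.dvd_sub hd1 hd2
          have := Nat.eq_zero_of_dvd_of_lt hdd (by omega : c s(x, w1) - c s(x, w2) < r)
          omega
      exact hinj x w1 (mem_nbrs.mpr ha1) w2 (mem_nbrs.mpr ha2) hceq
    -- build the fixed-point-free involution
    set f : (∀ i, Fin (n i)) → (∀ i, Fin (n i)) := fun x => (hex x).choose with hf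
    have hf1 : ∀ x, (hammingGraph k n).Adj x (f x) := fun x => (hex x).choose_spec.1
    have hf2 : ∀ x, r ∣ c s(x, f x) := fun x => (hex x).choose_spec.2
    have hinv : ∀ x, f (f x) = x := by
      intro x
      refine hun (f x) (f (f x)) x (hf1 (f x)) (hf2 (f x)) (hf1 x).symm ?_
      rw [Sym2.eq_swap]
      exact hf2 x
    have hnofix : ∀ x, f x ≠ x := fun x h => (hammingGraph k n).ne_of_adj (hf1 x) h.symm
    -- parity contradiction
    haveI : Fact (Nat.Prime 2) := ⟨Nat.prime_two⟩
    let F : Function.End (∀ i, Fin (n i)) := f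
    have hF : F ^ (2 : ℕ) ^ (1 : ℕ) = 1 := by
      have h2 : F ^ (2 : ℕ) ^ (1 : ℕ) = F * F := by rw [pow_one, sq]
      rw [h2]
      funext x
      show f (f x) = x
      exact hinv x
    have hmod := Equiv.Perm.card_fixedPoints_modEq (f := F) hF
    have hfix : Fintype.card (Function.fixedPoints F) = 0 := by
      rw [Fintype.card_eq_zero_iff]
      exact ⟨fun y => hnofix y.1 y.2⟩
    rw [hfix] at hmod
    have h2dvd : 2 ∣ Fintype.card (∀ i, Fin (n i)) := (Nat.modEq_zero_iff_dvd.mp hmod)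
    rw [Fintype.card_pi] at h2dvd
    simp only [Fintype.card_fin] at h2dvd
    rw [Nat.odd_iff] at hodd
    omega

end HamProof
namespace HamProof

/-- Round-robin edge coloring class for `K_N`, `N` even. -/
def rr (N a b : ℕ) : ℕ :=
  if a = N - 1 then 2 * b % (N - 1)
  else if b = N - 1 then 2 * a % (N - 1)
  else (a + b) % (N - 1)

lemma rr_symm (N a b : ℕ) : rr N a b = rr N b a := by
  unfold rr
  split_ifs <;> subst_vars <;> first | rfl | rw [Nat.add_comm]

lemma rr_lt {N : ℕ} (hN : 2 ≤ N) (a b : ℕ) : rr N a b < N - 1 := by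
  unfold rr
  split_ifs <;> exact Nat.mod_lt _ (by omega)

lemma coprime_two_of_odd {m : ℕ} (hm : ¬ 2 ∣ m) : Nat.Coprime 2 m :=
  (Nat.prime_two.coprime_iff_not_dvd).mpr hm

lemma cancel_two {m b1 b2 : ℕ} (hm : ¬ 2 ∣ m) (hb1 : b1 < m) (hb2 : b2 < m)
    (h : 2 * b1 % m = 2 * b2 % m) : b1 = b2 := by
  have := (Nat.ModEq.cancel_left_of_coprime (by
    have := coprime_two_of_odd hm
    simpa [Nat.Coprime] using this) (h : 2 * b1 ≡ 2 * b2 [MOD m]))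
  have h2 : b1 % m = b2 % m := this
  rwa [Nat.mod_eq_of_lt hb1, Nat.mod_eq_of_lt hb2] at h2

lemma cancel_add {m a b1 b2 : ℕ} (hb1 : b1 < m) (hb2 : b2 < m)
    (h : (a + b1) % m = (a + b2) % m) : b1 = b2 := by
  have h2 : b1 % m = b2 % m := Nat.ModEq.add_left_cancel' a h
  rwa [Nat.mod_eq_of_lt hb1, Nat.mod_eq_of_lt hb2] at h2

lemma rr_image {N : ℕ} (hN : 2 ≤ N) (hNe : 2 ∣ N) (a : Fin N) :
    (Finset.univ.filter (· ≠ a)).image (fun b : Fin N => rr N (a : ℕ) (b : ℕ)) =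
      Finset.range (N - 1) := by
  have hmodd : ¬ 2 ∣ (N - 1) := by omega
  apply Finset.eq_of_subset_of_card_le
  · intro j hj
    obtain ⟨b, -, rfl⟩ := Finset.mem_image.mp hj
    exact Finset.mem_range.mpr (rr_lt hN _ _)
  · rw [Finset.card_range, Finset.card_image_of_injOn, Finset.filter_ne',
      Finset.card_erase_of_mem (Finset.mem_univ _)]
    · simp
    · intro b1 hb1 b2 hb2 heq
      simp only [Finset.coe_filter, Set.mem_setOf_eq, Finset.mem_univ, true_and] at hb1 hb2
      have hb1N : (b1 : ℕ) < N := b1.isLt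
      have hb2N : (b2 : ℕ) < N := b2.isLt
      have haN : (a : ℕ) < N := a.isLt
      have hne1 : (b1 : ℕ) ≠ (a : ℕ) := fun h => hb1 (Fin.ext h)
      have hne2 : (b2 : ℕ) ≠ (a : ℕ) := fun h => hb2 (Fin.ext h)
      apply Fin.ext
      simp only [rr] at heq
      split_ifs at heq with h1 h2 h3 h4
      · exact cancel_two hmodd (by omega) (by omega) heq
      · omega
      · have : (b2 : ℕ) = (a : ℕ) := cancel_add (m := N - 1) (by omega) (by omega)
          (by rw [← heq]; ring_nf)
        omega
      · have : (b1 : ℕ) = (a : ℕ) := cancel_add (m := N - 1) (by omega) (by omega)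
          (by rw [heq]; ring_nf)
        omega
      · exact cancel_add (m := N - 1) (by omega) (by omega) heq

lemma two_mul_mod_ne_zero {N a : ℕ} (hNo : ¬ 2 ∣ N) (ha : a ≠ 0) (haN : a < N) :
    2 * a % N ≠ 0 := by
  intro h
  have hdvd : N ∣ 2 * a := Nat.dvd_of_mod_eq_zero h
  have : N ∣ a := (Nat.Coprime.dvd_of_dvd_mul_left
    (by simpa [Nat.Coprime] using (coprime_two_of_odd hNo).symm) hdvd)
  exact absurd (Nat.le_of_dvd (Nat.pos_of_ne_zero ha) this) (by omega)

lemma odd_image {N : ℕ} (hN : 2 ≤ N) (hNo : ¬ 2 ∣ N) (a : Fin N) :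
    (Finset.univ.filter (· ≠ a)).image (fun b : Fin N => ((a : ℕ) + (b : ℕ)) % N) =
      (Finset.range N).erase (2 * (a : ℕ) % N) := by
  apply Finset.eq_of_subset_of_card_le
  · intro j hj
    obtain ⟨b, hb, rfl⟩ := Finset.mem_image.mp hj
    simp only [Finset.mem_filter, Finset.mem_univ, true_and] at hb
    refine Finset.mem_erase.mpr ⟨?_, Finset.mem_range.mpr (Nat.mod_lt _ (by omega))⟩
    intro h
    have : (b : ℕ) = (a : ℕ) := cancel_add (m := N) b.isLt a.isLt
      (h.trans (by ring_nf))
    exact hb (Fin.ext this)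
  · rw [Finset.card_erase_of_mem (Finset.mem_range.mpr (Nat.mod_lt _ (by omega : 0 < N))),
      Finset.card_range, Finset.card_image_of_injOn, Finset.filter_ne',
      Finset.card_erase_of_mem (Finset.mem_univ _)]
    · simp
    · intro b1 hb1 b2 hb2 heq
      exact Fin.ext (cancel_add (m := N) b1.isLt b2.isLt heq)

lemma image_F {N w μ e : ℕ} (hN : 2 ≤ N) (heN : e < N) :
    ((Finset.range N).erase e).image (fun c => if c = 0 then μ else w + c) =
      if e = 0 then Finset.Icc (w + 1) (w + N - 1)
      else insert μ ((Finset.Icc (w + 1) (w + N - 1)).erase (w + e)) := by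
  split_ifs with he0
  · subst he0
    ext j
    simp only [Finset.mem_image, Finset.mem_erase, Finset.mem_range, Finset.mem_Icc]
    constructor
    · rintro ⟨c, ⟨hc0, hcN⟩, rfl⟩
      rw [if_neg hc0]
      omega
    · intro hj
      exact ⟨j - w, by omega, by rw [if_neg (by omega)]; omega⟩
  · ext j
    simp only [Finset.mem_image, Finset.mem_erase, Finset.mem_range, Finset.mem_Icc,
      Finset.mem_insert]
    constructor
    · rintro ⟨c, ⟨hce, hcN⟩, rfl⟩
      rcases eq_or_ne c 0 with rfl | hc0
      · rw [if_pos rfl]; left; rfl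
      · rw [if_neg hc0]; right; constructor <;> omega
    · rintro (rfl | ⟨hje, hj⟩)
      · exact ⟨0, ⟨Ne.symm he0, by omega⟩, by rw [if_pos rfl]⟩
      · exact ⟨j - w, ⟨by omega, by omega⟩, by rw [if_neg (by omega)]; omega⟩

lemma image_F_full {N' w μ : ℕ} (hN' : 1 ≤ N') :
    (Finset.range N').image (fun c => if c = 0 then μ else w + c) =
      insert μ (Finset.Icc (w + 1) (w + N' - 1)) := by
  ext j
  simp only [Finset.mem_image, Finset.mem_range, Finset.mem_insert, Finset.mem_Icc]
  constructor
  · rintro ⟨c, hcN, rfl⟩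
    rcases eq_or_ne c 0 with rfl | hc0
    · rw [if_pos rfl]; left; rfl
    · rw [if_neg hc0]; right; omega
  · rintro (rfl | hj)
    · exact ⟨0, by omega, by rw [if_pos rfl]⟩
    · exact ⟨j - w, by omega, by rw [if_neg (by omega)]; omega⟩

end HamProof
namespace HamProof

variable {k : ℕ}

/-- Color offsets: `woff n J m = 1 + ∑_{i < m, i ≠ J} (n i - 1)`. -/
def woff (n : Fin k → ℕ) (J : Fin k) : ℕ → ℕ
  | 0 => 1
  | m + 1 => woff n J m +
      (if h : m < k then (if (⟨m, h⟩ : Fin k) = J then 0 else n ⟨m, h⟩ - 1) else 0)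

/-- The "missing color" of vertex `x` after processing coordinates `< m` (excluding `J`). -/
def mu (n : Fin k → ℕ) (J : Fin k) (x : ∀ i, Fin (n i)) : ℕ → ℕ
  | 0 => 1
  | m + 1 =>
    if h : m < k then
      (if (⟨m, h⟩ : Fin k) ≠ J ∧ ¬ 2 ∣ n ⟨m, h⟩ ∧ (x ⟨m, h⟩ : ℕ) ≠ 0
        then woff n J m + 2 * (x ⟨m, h⟩ : ℕ) % n ⟨m, h⟩
        else mu n J x m)
    else mu n J x m

variable {n : Fin k → ℕ} {J : Fin k}

lemma woff_pos (m : ℕ) : 1 ≤ woff n J m := by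
  induction m with
  | zero => exact le_rfl
  | succ m ih => rw [woff]; omega

lemma woff_le_succ (m : ℕ) : woff n J m ≤ woff n J (m + 1) := by rw [woff]; omega

lemma woff_mono : Monotone (woff n J) := monotone_nat_of_le_succ woff_le_succ

lemma woff_succ_of_ne (i : Fin k) (hi : i ≠ J) :
    woff n J (i.val + 1) = woff n J i.val + (n i - 1) := by
  rw [woff, dif_pos i.isLt, if_neg (by simpa [Fin.eta] using hi)]

lemma woff_succ_J : woff n J (J.val + 1) = woff n J J.val := by
  rw [woff, dif_pos J.isLt, if_pos (by simp [Fin.eta])]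
  omega

lemma mu_pos (x : ∀ i, Fin (n i)) (m : ℕ) : 1 ≤ mu n J x m := by
  induction m with
  | zero => exact le_rfl
  | succ m ih =>
    rw [mu]
    split_ifs with h1 h2
    · have := woff_pos (n := n) (J := J) m
      omega
    · exact ih
    · exact ih

lemma mu_le (x : ∀ i, Fin (n i)) (m : ℕ) : mu n J x m ≤ woff n J m := by
  induction m with
  | zero => exact le_rfl
  | succ m ih =>
    rw [mu, woff]
    split_ifs with h1 h2 h3
    · exact absurd h3 h2.1
    · have hlt : 2 * (x ⟨m, h1⟩ : ℕ) % n ⟨m, h1⟩ < n ⟨m, h1⟩ :=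
        Nat.mod_lt _ (by have := (x ⟨m, h1⟩).isLt; omega)
      have hx := (x ⟨m, h1⟩).isLt
      omega
    · omega
    · omega
    · omega

lemma mu_congr {x y : ∀ i, Fin (n i)} (m : ℕ)
    (h : ∀ i : Fin k, i.val < m → i ≠ J → x i = y i) : mu n J x m = mu n J y m := by
  induction m with
  | zero => rfl
  | succ m ih =>
    have ih' := ih fun i hi hij => h i (by omega) hij
    rcases Nat.lt_or_ge m k with h1 | h1
    · have hval : ∀ z : ∀ i, Fin (n i), mu n J z (m + 1) =
          if (⟨m, h1⟩ : Fin k) ≠ J ∧ ¬ 2 ∣ n ⟨m, h1⟩ ∧ (z ⟨m, h1⟩ : ℕ) ≠ 0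
            then woff n J m + 2 * (z ⟨m, h1⟩ : ℕ) % n ⟨m, h1⟩
            else mu n J z m := fun z => by rw [mu, dif_pos h1]
      rw [hval x, hval y]
      by_cases hc : (⟨m, h1⟩ : Fin k) ≠ J ∧ ¬ 2 ∣ n ⟨m, h1⟩ ∧ (x ⟨m, h1⟩ : ℕ) ≠ 0
      · have hxy := h ⟨m, h1⟩ (Nat.lt_succ_self m) hc.1
        rw [if_pos hc, if_pos (by rw [← hxy]; exact hc), hxy]
      · have hc' : ¬ ((⟨m, h1⟩ : Fin k) ≠ J ∧ ¬ 2 ∣ n ⟨m, h1⟩ ∧ (y ⟨m, h1⟩ : ℕ) ≠ 0) := by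
          intro hcy
          exact hc ⟨hcy.1, hcy.2.1, by
            rw [h ⟨m, h1⟩ (Nat.lt_succ_self m) hcy.1]; exact hcy.2.2⟩
        rw [if_neg hc, if_neg hc', ih']
    · have hval : ∀ z : ∀ i, Fin (n i), mu n J z (m + 1) = mu n J z m := fun z => by
        rw [mu, dif_neg (by omega : ¬ m < k)]
      rw [hval x, hval y, ih']

lemma mu_succ_skip {x : ∀ i, Fin (n i)} {m : ℕ} (h : m < k)
    (hcond : ¬ ((⟨m, h⟩ : Fin k) ≠ J ∧ ¬ 2 ∣ n ⟨m, h⟩ ∧ (x ⟨m, h⟩ : ℕ) ≠ 0)) :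
    mu n J x (m + 1) = mu n J x m := by
  rw [mu, dif_pos h, if_neg hcond]

lemma mu_succ_odd {x : ∀ i, Fin (n i)} {i : Fin k} (hij : i ≠ J) (hodd : ¬ 2 ∣ n i)
    (hx : (x i : ℕ) ≠ 0) :
    mu n J x (i.val + 1) = woff n J i.val + 2 * (x i : ℕ) % n i := by
  rw [mu, dif_pos i.isLt]
  rw [if_pos (show (⟨i.val, i.isLt⟩ : Fin k) ≠ J ∧ ¬ 2 ∣ n ⟨i.val, i.isLt⟩ ∧
    (x ⟨i.val, i.isLt⟩ : ℕ) ≠ 0 from ⟨hij, hodd, hx⟩)]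

/-- The edge coloring, described by coordinate direction: the color of the edge from `x`
to the vertex obtained by changing coordinate `i` to value `b`. -/
def fcol (n : Fin k → ℕ) (J : Fin k) (x : ∀ i, Fin (n i)) (i : Fin k) (b : Fin (n i)) : ℕ :=
  if i = J then
    (if rr (n i) (x i : ℕ) (b : ℕ) = 0 then mu n J x k
      else woff n J k + rr (n i) (x i : ℕ) (b : ℕ))
  else if 2 ∣ n i then woff n J i.val + 1 + rr (n i) (x i : ℕ) (b : ℕ)
  else if ((x i : ℕ) + (b : ℕ)) % n i = 0 then mu n J x i.val
  else woff n J i.val + ((x i : ℕ) + (b : ℕ)) % n i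

lemma fcol_symm {x y : ∀ i, Fin (n i)} (i : Fin k) (hxy : ∀ j, j ≠ i → x j = y j) :
    fcol n J x i (y i) = fcol n J y i (x i) := by
  by_cases hiJ : i = J
  · have hmu : mu n J x k = mu n J y k :=
      mu_congr k fun j _ hj => hxy j (by rw [hiJ]; exact hj)
    simp only [fcol, if_pos hiJ, rr_symm (n i) (x i : ℕ) (y i : ℕ), hmu]
  · have hmu : mu n J x i.val = mu n J y i.val :=
      mu_congr i.val fun j hj _ => hxy j (fun hji => by subst hji; omega)
    simp only [fcol, if_neg hiJ, rr_symm (n i) (x i : ℕ) (y i : ℕ), hmu,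
      Nat.add_comm (x i : ℕ) (y i : ℕ)]

end HamProof

namespace HamProof

variable {k : ℕ} {n : Fin k → ℕ} {J : Fin k}

lemma Im_even (x : ∀ i, Fin (n i)) {i : Fin k} (hn2 : 2 ≤ n i) (hiJ : i ≠ J)
    (hev : 2 ∣ n i) :
    (Finset.univ.filter (· ≠ x i)).image (fcol n J x i) =
      Finset.Icc (woff n J i.val + 1) (woff n J i.val + (n i - 1)) := by
  have hcongr : Finset.image (fcol n J x i) (Finset.univ.filter (· ≠ x i)) =
      Finset.image ((fun c => woff n J i.val + 1 + c) ∘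
        (fun b : Fin (n i) => rr (n i) (x i : ℕ) (b : ℕ)))
        (Finset.univ.filter (· ≠ x i)) :=
    Finset.image_congr (fun b _ => by
      simp only [fcol, if_neg hiJ, if_pos hev, Function.comp])
  rw [hcongr]
  rw [← Finset.image_image, rr_image hn2 hev (x i)]
  ext j
  simp only [Finset.mem_image, Finset.mem_range, Finset.mem_Icc]
  constructor
  · rintro ⟨c, hc, rfl⟩; omega
  · intro hj; exact ⟨j - (woff n J i.val + 1), by omega, by omega⟩

lemma Im_odd_zero (x : ∀ i, Fin (n i)) {i : Fin k} (hn2 : 2 ≤ n i) (hiJ : i ≠ J)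
    (hodd : ¬ 2 ∣ n i) (hx : (x i : ℕ) = 0) :
    (Finset.univ.filter (· ≠ x i)).image (fcol n J x i) =
      Finset.Icc (woff n J i.val + 1) (woff n J i.val + n i - 1) := by
  have hcongr : Finset.image (fcol n J x i) (Finset.univ.filter (· ≠ x i)) =
      Finset.image ((fun c => if c = 0 then mu n J x i.val else woff n J i.val + c) ∘
        (fun b : Fin (n i) => ((x i : ℕ) + (b : ℕ)) % n i))
        (Finset.univ.filter (· ≠ x i)) :=
    Finset.image_congr (fun b _ => by
      simp only [fcol, if_neg hiJ, if_neg hodd, Function.comp])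
  rw [hcongr]
  rw [← Finset.image_image, odd_image hn2 hodd (x i), hx]
  rw [show 2 * 0 % n i = 0 by simp]
  rw [image_F hn2 (by omega), if_pos rfl]

lemma Im_odd_ne (x : ∀ i, Fin (n i)) {i : Fin k} (hn2 : 2 ≤ n i) (hiJ : i ≠ J)
    (hodd : ¬ 2 ∣ n i) (hx : (x i : ℕ) ≠ 0) :
    (Finset.univ.filter (· ≠ x i)).image (fcol n J x i) =
      insert (mu n J x i.val) ((Finset.Icc (woff n J i.val + 1)
        (woff n J i.val + n i - 1)).erase (woff n J i.val + 2 * (x i : ℕ) % n i)) := by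
  have hcongr : Finset.image (fcol n J x i) (Finset.univ.filter (· ≠ x i)) =
      Finset.image ((fun c => if c = 0 then mu n J x i.val else woff n J i.val + c) ∘
        (fun b : Fin (n i) => ((x i : ℕ) + (b : ℕ)) % n i))
        (Finset.univ.filter (· ≠ x i)) :=
    Finset.image_congr (fun b _ => by
      simp only [fcol, if_neg hiJ, if_neg hodd, Function.comp])
  rw [hcongr]
  rw [← Finset.image_image, odd_image hn2 hodd (x i)]
  rw [image_F hn2 (Nat.mod_lt _ (by omega)),
    if_neg (two_mul_mod_ne_zero hodd hx (x i).isLt)]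

lemma Im_J (x : ∀ i, Fin (n i)) (hn2 : 2 ≤ n J) (hev : 2 ∣ n J) :
    (Finset.univ.filter (· ≠ x J)).image (fcol n J x J) =
      insert (mu n J x k) (Finset.Icc (woff n J k + 1) (woff n J k + (n J - 1) - 1)) := by
  have hcongr : Finset.image (fcol n J x J) (Finset.univ.filter (· ≠ x J)) =
      Finset.image ((fun c => if c = 0 then mu n J x k else woff n J k + c) ∘
        (fun b : Fin (n J) => rr (n J) (x J : ℕ) (b : ℕ)))
        (Finset.univ.filter (· ≠ x J)) :=
    Finset.image_congr (fun b _ => by simp [fcol, Function.comp])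
  rw [hcongr]
  rw [← Finset.image_image, rr_image hn2 hev (x J), image_F_full (by omega)]

/-- The set of colors on edges at `x` in coordinates `< m` other than `J`. -/
def colset (n : Fin k → ℕ) (J : Fin k) (x : ∀ i, Fin (n i)) (m : ℕ) : Finset ℕ :=
  (Finset.univ.filter fun i : Fin k => i.val < m ∧ i ≠ J).biUnion
    fun i => (Finset.univ.filter (· ≠ x i)).image (fcol n J x i)

lemma colset_eq (hn : ∀ i, 2 ≤ n i) (x : ∀ i, Fin (n i)) :
    ∀ m, colset n J x m = (Finset.Icc 1 (woff n J m)).erase (mu n J x m) := by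
  intro m
  induction m with
  | zero =>
    rw [colset]
    rw [show (Finset.univ.filter fun i : Fin k => i.val < 0 ∧ i ≠ J) = ∅ by
      ext i; simp]
    simp [woff, mu]
  | succ m ih =>
    rcases Nat.lt_or_ge m k with h | h
    · have hvm : ((⟨m, h⟩ : Fin k) : ℕ) = m := rfl
      have hfil : (Finset.univ.filter fun i : Fin k => i.val < m + 1 ∧ i ≠ J) =
          if (⟨m, h⟩ : Fin k) = J then (Finset.univ.filter fun i : Fin k => i.val < m ∧ i ≠ J)
          else insert ⟨m, h⟩ (Finset.univ.filter fun i : Fin k => i.val < m ∧ i ≠ J) := by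
        split_ifs with hJ
        · ext i
          simp only [Finset.mem_filter, Finset.mem_univ, true_and]
          constructor
          · rintro ⟨hlt, hne⟩
            refine ⟨?_, hne⟩
            have : i.val ≠ m := fun he => hne (by rw [← hJ]; exact Fin.ext he)
            omega
          · rintro ⟨hlt, hne⟩
            exact ⟨by omega, hne⟩
        · ext i
          simp only [Finset.mem_filter, Finset.mem_insert, Finset.mem_univ, true_and]
          constructor
          · rintro ⟨hlt, hne⟩
            by_cases he : i.val = m
            · exact Or.inl (Fin.ext he)
            · exact Or.inr ⟨by omega, hne⟩
          · rintro (rfl | ⟨hlt, hne⟩)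
            · exact ⟨by omega, hJ⟩
            · exact ⟨by omega, hne⟩
      rw [colset, hfil]
      split_ifs with hJ
      · have hw : woff n J (m + 1) = woff n J m := by
          rw [woff, dif_pos h, if_pos hJ]
          omega
        have hm' : mu n J x (m + 1) = mu n J x m :=
          mu_succ_skip h (fun hc => hc.1 hJ)
        rw [hw, hm', ← ih, colset]
      · rw [Finset.biUnion_insert]
        have hw : woff n J (m + 1) = woff n J m + (n ⟨m, h⟩ - 1) := by
          rw [woff, dif_pos h, if_neg hJ]
        have hmum : 1 ≤ mu n J x m := mu_pos x m
        have hmuw : mu n J x m ≤ woff n J m := mu_le x m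
        have hcol : colset n J x m = (Finset.Icc 1 (woff n J m)).erase (mu n J x m) := ih
        rw [colset] at hcol
        rw [hcol]
        by_cases hev : 2 ∣ n ⟨m, h⟩
        · have hIm := Im_even x (hn ⟨m, h⟩) hJ hev
          rw [hvm] at hIm
          rw [hIm]
          have hm' : mu n J x (m + 1) = mu n J x m :=
            mu_succ_skip h (fun hc => hc.2.1 hev)
          have hn2 := hn ⟨m, h⟩
          rw [hm', hw]
          ext j
          simp only [Finset.mem_union, Finset.mem_Icc, Finset.mem_erase]
          omega
        · by_cases hx0 : (x ⟨m, h⟩ : ℕ) = 0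
          · have hIm := Im_odd_zero x (hn ⟨m, h⟩) hJ hev hx0
            rw [hvm] at hIm
            rw [hIm]
            have hm' : mu n J x (m + 1) = mu n J x m :=
              mu_succ_skip h (fun hc => hc.2.2 hx0)
            have hn2 := hn ⟨m, h⟩
            rw [hm', hw]
            ext j
            simp only [Finset.mem_union, Finset.mem_Icc, Finset.mem_erase]
            omega
          · have hIm := Im_odd_ne x (hn ⟨m, h⟩) hJ hev hx0
            rw [hvm] at hIm
            rw [hIm]
            have hm' : mu n J x (m + 1) = woff n J m + 2 * (x ⟨m, h⟩ : ℕ) % n ⟨m, h⟩ := by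
              rw [mu, dif_pos h, if_pos ⟨hJ, hev, hx0⟩]
            have hn2 := hn ⟨m, h⟩
            have hc1 : 2 * (x ⟨m, h⟩ : ℕ) % n ⟨m, h⟩ ≠ 0 :=
              two_mul_mod_ne_zero hev hx0 (x ⟨m, h⟩).isLt
            have hc2 : 2 * (x ⟨m, h⟩ : ℕ) % n ⟨m, h⟩ < n ⟨m, h⟩ := Nat.mod_lt _ (by omega)
            rw [hm', hw]
            ext j
            simp only [Finset.mem_union, Finset.mem_insert, Finset.mem_Icc, Finset.mem_erase]
            omega
    · have hfil : (Finset.univ.filter fun i : Fin k => i.val < m + 1 ∧ i ≠ J) =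
          (Finset.univ.filter fun i : Fin k => i.val < m ∧ i ≠ J) := by
        ext i
        have := i.isLt
        simp only [Finset.mem_filter, Finset.mem_univ, true_and]
        constructor
        · rintro ⟨-, hne⟩; exact ⟨by omega, hne⟩
        · rintro ⟨-, hne⟩; exact ⟨by omega, hne⟩
      have hw : woff n J (m + 1) = woff n J m := by
        rw [woff, dif_neg (by omega : ¬ m < k)]
        omega
      have hm' : mu n J x (m + 1) = mu n J x m := by
        rw [mu, dif_neg (by omega : ¬ m < k)]
      rw [colset, hfil, hw, hm', ← ih, colset]

lemma colors_full (hn : ∀ i, 2 ≤ n i) (hJe : 2 ∣ n J) (x : ∀ i, Fin (n i)) :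
    (dirs x).image (fun p : Σ i : Fin k, Fin (n i) => fcol n J x p.1 p.2) =
      Finset.Icc 1 (woff n J k + (n J - 2)) := by
  have h1 : (dirs x).image (fun p : Σ i : Fin k, Fin (n i) => fcol n J x p.1 p.2) =
      Finset.univ.biUnion fun i : Fin k =>
        (Finset.univ.filter (· ≠ x i)).image (fcol n J x i) := by
    ext j
    simp only [dirs, Finset.mem_image, Finset.mem_filter, Finset.mem_univ, true_and,
      Finset.mem_biUnion, Sigma.exists]
  have h2 : (Finset.univ : Finset (Fin k)) =
      insert J (Finset.univ.filter fun i : Fin k => i.val < k ∧ i ≠ J) := by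
    ext i
    have := i.isLt
    simp only [Finset.mem_univ, Finset.mem_insert, Finset.mem_filter, true_and, true_iff]
    by_cases hiJ : i = J
    · exact Or.inl hiJ
    · exact Or.inr ⟨by omega, hiJ⟩
  rw [h1, h2, Finset.biUnion_insert]
  have h3 := colset_eq (J := J) hn x k
  rw [colset] at h3
  rw [h3, Im_J x (hn J) hJe]
  have hmum : 1 ≤ mu n J x k := mu_pos x k
  have hmuw : mu n J x k ≤ woff n J k := mu_le x k
  have hn2 := hn J
  ext j
  simp only [Finset.mem_union, Finset.mem_insert, Finset.mem_Icc, Finset.mem_erase]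
  omega

end HamProof
namespace HamProof

variable {k : ℕ} {n : Fin k → ℕ} {J : Fin k}

lemma woff_sum : ∀ m, woff n J m =
    1 + ∑ i ∈ (Finset.univ.filter fun i : Fin k => i.val < m ∧ i ≠ J), (n i - 1) := by
  intro m
  induction m with
  | zero =>
    rw [show (Finset.univ.filter fun i : Fin k => i.val < 0 ∧ i ≠ J) = ∅ by ext i; simp]
    simp [woff]
  | succ m ih =>
    rcases Nat.lt_or_ge m k with h | h
    · by_cases hJ : (⟨m, h⟩ : Fin k) = J
      · have hfil : (Finset.univ.filter fun i : Fin k => i.val < m + 1 ∧ i ≠ J) =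
            (Finset.univ.filter fun i : Fin k => i.val < m ∧ i ≠ J) := by
          ext i
          simp only [Finset.mem_filter, Finset.mem_univ, true_and]
          constructor
          · rintro ⟨hlt, hne⟩
            have : i.val ≠ m := fun he => hne (by rw [← hJ]; exact Fin.ext he)
            exact ⟨by omega, hne⟩
          · rintro ⟨hlt, hne⟩
            exact ⟨by omega, hne⟩
        rw [hfil, woff, dif_pos h, if_pos hJ, ih]
        omega
      · have hfil : (Finset.univ.filter fun i : Fin k => i.val < m + 1 ∧ i ≠ J) =
            insert ⟨m, h⟩ (Finset.univ.filter fun i : Fin k => i.val < m ∧ i ≠ J) := by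
          ext i
          simp only [Finset.mem_filter, Finset.mem_insert, Finset.mem_univ, true_and]
          constructor
          · rintro ⟨hlt, hne⟩
            by_cases he : i.val = m
            · exact Or.inl (Fin.ext he)
            · exact Or.inr ⟨by omega, hne⟩
          · rintro (rfl | ⟨hlt, hne⟩)
            · exact ⟨Nat.lt_succ_self m, hJ⟩
            · exact ⟨by omega, hne⟩
        rw [hfil, Finset.sum_insert (by
          simp only [Finset.mem_filter, Finset.mem_univ, true_and]
          rintro ⟨hlt, -⟩
          exact Nat.lt_irrefl m hlt), woff, dif_pos h, if_neg hJ, ih]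
        omega
    · have hfil : (Finset.univ.filter fun i : Fin k => i.val < m + 1 ∧ i ≠ J) =
          (Finset.univ.filter fun i : Fin k => i.val < m ∧ i ≠ J) := by
        ext i
        have := i.isLt
        simp only [Finset.mem_filter, Finset.mem_univ, true_and]
        constructor
        · rintro ⟨-, hne⟩; exact ⟨by omega, hne⟩
        · rintro ⟨-, hne⟩; exact ⟨by omega, hne⟩
      rw [hfil, woff, dif_neg (by omega : ¬ m < k), ih]
      omega

lemma tsum (hn : ∀ i, 2 ≤ n i) :
    woff n J k + (n J - 2) = ∑ i, (n i - 1) := by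
  have hfe : (Finset.univ.filter fun i : Fin k => i.val < k ∧ i ≠ J) =
      Finset.univ.erase J := by
    ext i
    have := i.isLt
    simp only [Finset.mem_filter, Finset.mem_univ, true_and, Finset.mem_erase, and_true]
    constructor
    · rintro ⟨-, hne⟩; exact hne
    · intro hne; exact ⟨by omega, hne⟩
  have h1 := woff_sum (n := n) (J := J) k
  rw [hfe] at h1
  have h2 : (∑ i ∈ Finset.univ.erase J, (n i - 1)) + (n J - 1) = ∑ i, (n i - 1) :=
    Finset.sum_erase_add Finset.univ (fun i => n i - 1) (Finset.mem_univ J)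
  have h3 := hn J
  omega

noncomputable def ecol (n : Fin k → ℕ) (J : Fin k) (x y : ∀ i, Fin (n i)) : ℕ :=
  if h : ∃ i, x i ≠ y i ∧ ∀ j, x j ≠ y j → j = i then fcol n J x h.choose (y h.choose) else 0

lemma ecol_eq_fcol {x y : ∀ i, Fin (n i)}
    (h : ∃ i, x i ≠ y i ∧ ∀ j, x j ≠ y j → j = i) {i : Fin k} (hi : x i ≠ y i) :
    ecol n J x y = fcol n J x i (y i) := by
  rw [ecol, dif_pos h]
  obtain ⟨-, hu⟩ := h.choose_spec
  rw [← hu i hi]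

lemma ecol_symm (n : Fin k → ℕ) (J : Fin k) (x y : ∀ i, Fin (n i)) :
    ecol n J x y = ecol n J y x := by
  by_cases h : ∃ i, x i ≠ y i ∧ ∀ j, x j ≠ y j → j = i
  · obtain ⟨i, hi, hu⟩ := id h
    have h' : ∃ i, y i ≠ x i ∧ ∀ j, y j ≠ x j → j = i :=
      ⟨i, Ne.symm hi, fun j hj => hu j (Ne.symm hj)⟩
    rw [ecol_eq_fcol h hi, ecol_eq_fcol h' (Ne.symm hi)]
    exact fcol_symm i fun j hj => by_contra fun hne => hj (hu j hne)
  · have h' : ¬ ∃ i, y i ≠ x i ∧ ∀ j, y j ≠ x j → j = i := by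
      rintro ⟨i, hi, hu⟩
      exact h ⟨i, Ne.symm hi, fun j hj => hu j (Ne.symm hj)⟩
    rw [ecol, dif_neg h, ecol, dif_neg h']

lemma even_case (hn : ∀ i, 2 ≤ n i) (hJe : 2 ∣ n J) :
    IntervalColorable (hammingGraph k n) := by
  set t := woff n J k + (n J - 2) with hT
  have hwpos := woff_pos (n := n) (J := J) k
  have ht : 1 ≤ t := by omega
  set c : Sym2 (∀ i, Fin (n i)) → ℕ :=
    Sym2.lift ⟨fun x y => ecol n J x y, fun x y => ecol_symm n J x y⟩ with hc
  have hkey := colors_full hn hJe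
  have hcadj : ∀ x y : ∀ i, Fin (n i), (hammingGraph k n).Adj x y →
      ∀ i : Fin k, x i ≠ y i → c s(x, y) = fcol n J x i (y i) := by
    intro x y hadj i hi
    have : c s(x, y) = ecol n J x y := rfl
    rw [this, ecol_eq_fcol hadj hi]
  have hbound : ∀ x y : ∀ i, Fin (n i), (hammingGraph k n).Adj x y →
      1 ≤ c s(x, y) ∧ c s(x, y) ≤ t := by
    intro x y hadj
    obtain ⟨i, hi, hu⟩ := id hadj
    rw [hcadj x y hadj i hi]
    have hmem : fcol n J x i (y i) ∈
        (dirs x).image (fun p : Σ i : Fin k, Fin (n i) => fcol n J x p.1 p.2) :=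
      Finset.mem_image_of_mem _ ((mem_dirs (p := ⟨i, y i⟩)).mpr (Ne.symm hi))
    rw [hkey x, Finset.mem_Icc] at hmem
    exact hmem
  have hsurj : ∀ x : ∀ i, Fin (n i), ∀ j, 1 ≤ j → j ≤ t →
      ∃ w, (hammingGraph k n).Adj x w ∧ c s(x, w) = j := by
    intro x j h1 h2
    have hmem : j ∈ (dirs x).image (fun p : Σ i : Fin k, Fin (n i) => fcol n J x p.1 p.2) := by
      rw [hkey x, Finset.mem_Icc]
      exact ⟨h1, h2⟩
    obtain ⟨p, hp, hfc⟩ := Finset.mem_image.mp hmem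
    have hb := mem_dirs.mp hp
    refine ⟨Function.update x p.1 p.2, adj_update hb, ?_⟩
    have hi : x p.1 ≠ Function.update x p.1 p.2 p.1 := by
      rw [Function.update_self]
      exact Ne.symm hb
    rw [hcadj _ _ (adj_update hb) p.1 hi]
    rw [show Function.update x p.1 p.2 p.1 = p.2 from Function.update_self _ _ _]
    exact hfc
  refine ⟨t, ht, c, ?_, ?_, ?_, ?_⟩
  · intro e he
    induction e using Sym2.ind with
    | _ x y => exact hbound x y ((hammingGraph k n).mem_edgeSet.mp he)
  · intro j h1 h2
    have hVne : Nonempty (∀ i, Fin (n i)) := ⟨fun i => ⟨0, by have := hn i; omega⟩⟩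
    obtain ⟨x⟩ := hVne
    obtain ⟨w, hw, hcw⟩ := hsurj x j h1 h2
    exact ⟨s(x, w), (hammingGraph k n).mem_edgeSet.mpr hw, hcw⟩
  · intro v w1 w2 ha1 ha2 hne hceq
    have hinj : Set.InjOn (fun p : Σ i : Fin k, Fin (n i) => fcol n J v p.1 p.2) (dirs v) := by
      apply Finset.card_image_iff.mp
      rw [hkey v, Nat.card_Icc, card_dirs v]
      have := tsum (n := n) (J := J) hn
      omega
    obtain ⟨i1, hi1, hu1⟩ := id ha1
    obtain ⟨i2, hi2, hu2⟩ := id ha2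
    have hc1 := hcadj v w1 ha1 i1 hi1
    have hc2 := hcadj v w2 ha2 i2 hi2
    have hp : (⟨i1, w1 i1⟩ : Σ i : Fin k, Fin (n i)) = ⟨i2, w2 i2⟩ := by
      apply hinj (Finset.mem_coe.mpr (mem_dirs.mpr (Ne.symm hi1)))
        (Finset.mem_coe.mpr (mem_dirs.mpr (Ne.symm hi2)))
      show fcol n J v i1 (w1 i1) = fcol n J v i2 (w2 i2)
      rw [← hc1, ← hc2, hceq]
    have h12 : i1 = i2 := congrArg Sigma.fst hp
    subst h12
    have hb : w1 i1 = w2 i1 := eq_of_heq (Sigma.mk.inj_iff.mp hp).2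
    exact hne ((eq_update_of_adj ha1 hi1).trans
      (by rw [hb]; exact (eq_update_of_adj ha2 hi2).symm))
  · intro v i j kk h1 h2 hij hjk
    obtain ⟨w1, hw1, hcw1⟩ := h1
    obtain ⟨w2, hw2, hcw2⟩ := h2
    have hb1 := hbound v w1 hw1
    have hb2 := hbound v w2 hw2
    exact hsurj v j (by omega) (by omega)

end HamProof

/-- The Hamming graph is interval colorable iff `n₁·n₂⋯n_k` is even. -/
theorem hamming_interval_colorable (k : ℕ) (n : Fin k → ℕ) (hn : ∀ i, 2 ≤ n i) :
    (Even (∏ i, n i) → IntervalColorable (hammingGraph k n)) ∧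
    (Odd (∏ i, n i) → ¬ IntervalColorable (hammingGraph k n)) := by
  constructor
  · intro he
    have hex : ∃ J, 2 ∣ n J := by
      by_contra hno
      push_neg at hno
      have hodd : Odd (∏ i, n i) :=
        Finset.prod_induction n Odd (fun a b ha hb => ha.mul hb) odd_one
          (fun i _ => Nat.odd_iff.mpr (by have := hno i; omega))
      rw [Nat.even_iff] at he
      rw [Nat.odd_iff] at hodd
      omega
    obtain ⟨J, hJ⟩ := hex
    exact HamProof.even_case hn hJ
  · intro ho
    exact HamProof.odd_case hn ho
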